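/- Let a1, ..., a6 be real numbers, set a7 = a4 + a5 − a6 and a8 = a1 + a2 + a3 − a4 − a5, and assume a1, ..., a8 are all nonnegative and the eight numbers a1, ..., a8 are pairwise distinct. Then the 9×9 matrix L₃ = a1·λ1⊗λ1 + a2·λ2ᵀ⊗λ2 + a3·λ3⊗λ3 + a4·λ4⊗λ4 + a5·λ5ᵀ⊗λ5 + a6·λ6⊗λ6 + a7·λ7ᵀ⊗λ7 + a8·λ8⊗λ8 − (2/3)(2a1+2a2+2a3+a4+a5)·I₉ has nine pairwise distinct eigenvalues; consequently for every λ ∈ ℂ the kernel of L₃ − λ·I₉ has dimension at most 1 (the index of cyclicity of L₃ equals 1), and the minimal polynomial of L₃ equals its characteristic polynomial. -/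

import Mathlib

open Matrix Complex Kronecker Polynomial

noncomputable section

/-- The Gell-Mann matrices. -/
def gm1 : Matrix (Fin 3) (Fin 3) ℂ := !![0, 1, 0; 1, 0, 0; 0, 0, 0]
def gm2 : Matrix (Fin 3) (Fin 3) ℂ := !![0, -I, 0; I, 0, 0; 0, 0, 0]
def gm3 : Matrix (Fin 3) (Fin 3) ℂ := !![1, 0, 0; 0, -1, 0; 0, 0, 0]
def gm4 : Matrix (Fin 3) (Fin 3) ℂ := !![0, 0, 1; 0, 0, 0; 1, 0, 0]
def gm5 : Matrix (Fin 3) (Fin 3) ℂ := !![0, 0, -I; 0, 0, 0; I, 0, 0]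
def gm6 : Matrix (Fin 3) (Fin 3) ℂ := !![0, 0, 0; 0, 0, 1; 0, 1, 0]
def gm7 : Matrix (Fin 3) (Fin 3) ℂ := !![0, 0, 0; 0, 0, -I; 0, I, 0]
def gm8 : Matrix (Fin 3) (Fin 3) ℂ :=
  ((↑(Real.sqrt 3) : ℂ))⁻¹ • !![1, 0, 0; 0, 1, 0; 0, 0, -2]

/-- The generator of evolution for 3-level systems, with `a7 = a4+a5−a6` and
`a8 = a1+a2+a3−a4−a5` substituted. -/
def gen3 (a1 a2 a3 a4 a5 a6 : ℝ) : Matrix (Fin 3 × Fin 3) (Fin 3 × Fin 3) ℂ :=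
  (a1 : ℂ) • (gm1 ⊗ₖ gm1) + (a2 : ℂ) • (gm2ᵀ ⊗ₖ gm2) + (a3 : ℂ) • (gm3 ⊗ₖ gm3)
    + (a4 : ℂ) • (gm4 ⊗ₖ gm4) + (a5 : ℂ) • (gm5ᵀ ⊗ₖ gm5) + (a6 : ℂ) • (gm6 ⊗ₖ gm6)
    + ((a4 + a5 - a6 : ℝ) : ℂ) • (gm7ᵀ ⊗ₖ gm7)
    + ((a1 + a2 + a3 - a4 - a5 : ℝ) : ℂ) • (gm8 ⊗ₖ gm8)
    - ((2 / 3 * (2 * a1 + 2 * a2 + 2 * a3 + a4 + a5) : ℝ) : ℂ)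
        • (1 : Matrix (Fin 3 × Fin 3) (Fin 3 × Fin 3) ℂ)

namespace Gen3Aux

lemma gm2T : gm2ᵀ = !![0, I, 0; -I, 0, 0; 0, 0, 0] := by
  rw [gm2]; ext i j; fin_cases i <;> fin_cases j <;> rfl

lemma gm5T : gm5ᵀ = !![0, 0, I; 0, 0, 0; -I, 0, 0] := by
  rw [gm5]; ext i j; fin_cases i <;> fin_cases j <;> rfl

lemma gm7T : gm7ᵀ = !![0, 0, 0; 0, 0, I; 0, -I, 0] := by
  rw [gm7]; ext i j; fin_cases i <;> fin_cases j <;> rfl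

lemma k8 : gm8 ⊗ₖ gm8 = ((3:ℂ))⁻¹ • ((!![1, 0, 0; 0, 1, 0; 0, 0, -2] : Matrix (Fin 3) (Fin 3) ℂ) ⊗ₖ !![1, 0, 0; 0, 1, 0; 0, 0, -2]) := by
  rw [gm8, Matrix.smul_kronecker, Matrix.kronecker_smul, smul_smul]
  congr 1
  have h3 : ((Real.sqrt 3 : ℝ) : ℂ) * ((Real.sqrt 3 : ℝ) : ℂ) = 3 := by
    rw [← Complex.ofReal_mul, Real.mul_self_sqrt (by norm_num)]
    norm_num
  rw [← mul_inv, h3]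


variable {n : Type*} [Fintype n] [DecidableEq n]

/-- Conjugation by an invertible matrix, as an `AlgHom`. -/
def conjAlgHom (P Q : Matrix n n ℂ) (hPQ : P * Q = 1) (hQP : Q * P = 1) :
    Matrix n n ℂ →ₐ[ℂ] Matrix n n ℂ where
  toFun M := P * M * Q
  map_one' := by show P * 1 * Q = 1; rw [Matrix.mul_one, hPQ]
  map_mul' M N := by
    have h : (P * M * Q) * (P * N * Q) = P * M * ((Q * P) * (N * Q)) := by
      simp only [Matrix.mul_assoc]
    rw [h, hQP, Matrix.one_mul]
    simp only [Matrix.mul_assoc]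
  map_zero' := by simp
  map_add' M N := by show P * (M + N) * Q = P * M * Q + P * N * Q; rw [Matrix.mul_add, Matrix.add_mul]
  commutes' r := by
    show P * algebraMap ℂ (Matrix n n ℂ) r * Q = algebraMap ℂ (Matrix n n ℂ) r
    rw [Algebra.algebraMap_eq_smul_one, Matrix.mul_smul, Matrix.mul_one, Matrix.smul_mul, hPQ]

lemma conjAlgHom_injective (P Q : Matrix n n ℂ) (hPQ : P * Q = 1) (hQP : Q * P = 1) :
    Function.Injective (conjAlgHom P Q hPQ hQP) := by
  have e : ∀ M : Matrix n n ℂ, Q * (P * M * Q) * P = M := by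
    intro M
    calc Q * (P * M * Q) * P = (Q * P) * M * (Q * P) := by simp only [Matrix.mul_assoc]
      _ = M := by rw [hQP, Matrix.one_mul, Matrix.mul_one]
  intro M N h
  have h' : P * M * Q = P * N * Q := h
  rw [← e M, ← e N, h']

lemma charpoly_conj (P D Q : Matrix n n ℂ) (hPQ : P * Q = 1) :
    (P * D * Q).charpoly = D.charpoly := by
  have hmap : P.map (C : ℂ →+* ℂ[X]) * Q.map C = 1 := by
    rw [← Matrix.map_mul, hPQ, Matrix.map_one C (map_zero C) (map_one C)]
  have hch : charmatrix (P * D * Q) = P.map C * charmatrix D * Q.map C := by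
    rw [charmatrix, charmatrix]
    rw [Matrix.mul_sub, Matrix.sub_mul]
    congr 1
    · have hc : P.map C * Matrix.scalar n (X : ℂ[X]) = Matrix.scalar n (X : ℂ[X]) * P.map C :=
        (Matrix.scalar_commute (X : ℂ[X]) (fun r' => Commute.all _ _) (P.map C)).symm
      rw [hc, Matrix.mul_assoc, hmap, Matrix.mul_one]
    · simp only [RingHom.mapMatrix_apply]
      rw [← Matrix.map_mul, ← Matrix.map_mul]
  rw [Matrix.charpoly, Matrix.charpoly, hch, Matrix.det_mul, Matrix.det_mul]
  calc (P.map C).det * (charmatrix D).det * (Q.map C).det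
      = (charmatrix D).det * ((P.map C).det * (Q.map C).det) := by ring
    _ = (charmatrix D).det := by rw [← Matrix.det_mul, hmap, Matrix.det_one, mul_one]

lemma charpoly_diagonal (d : n → ℂ) :
    (Matrix.diagonal d).charpoly = ∏ i, (X - C (d i)) := by
  have h : charmatrix (Matrix.diagonal d) = Matrix.diagonal fun i => (X : ℂ[X]) - C (d i) := by
    ext i j
    by_cases hij : i = j
    · subst hij; simp
    · simp [hij, charmatrix_apply_ne _ _ _ hij, Matrix.diagonal_apply_ne _ hij]
  rw [Matrix.charpoly, h, Matrix.det_diagonal]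

lemma aeval_diagonal (d : n → ℂ) (p : ℂ[X]) :
    aeval (Matrix.diagonal d) p = Matrix.diagonal fun i => Polynomial.eval (d i) p := by
  have h1 : aeval (Matrix.diagonalAlgHom (n := n) ℂ d) p
      = Matrix.diagonalAlgHom ℂ (aeval d p) := aeval_algHom_apply _ _ _
  have h2 : ∀ i, (aeval d p) i = Polynomial.eval (d i) p := by
    intro i
    have := aeval_algHom_apply (Pi.evalAlgHom ℂ (fun _ : n => ℂ) i) d p
    simpa [Polynomial.aeval_def, Polynomial.eval₂_eq_eval_map] using this.symm
  have h3 : Matrix.diagonalAlgHom (n := n) ℂ d = Matrix.diagonal d := rfl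
  rw [← h3, h1]
  have h4 : (Matrix.diagonalAlgHom (n := n) ℂ (aeval d p)) = Matrix.diagonal (aeval d p) := rfl
  rw [h4]
  rw [show (aeval d p : n → ℂ) = fun i => Polynomial.eval (d i) p from funext h2]

lemma minpoly_diagonal (d : n → ℂ) (hd : Function.Injective d) :
    minpoly ℂ (Matrix.diagonal d) = (Matrix.diagonal d).charpoly := by
  have hint : IsIntegral ℂ (Matrix.diagonal d) := Algebra.IsIntegral.isIntegral _
  have hμ0 : minpoly ℂ (Matrix.diagonal d) ≠ 0 := minpoly.ne_zero hint
  have hdvd := Matrix.minpoly_dvd_charpoly (Matrix.diagonal d)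
  have hroot : ∀ i, (minpoly ℂ (Matrix.diagonal d)).IsRoot (d i) := by
    intro i
    have h0 := minpoly.aeval ℂ (Matrix.diagonal d)
    rw [aeval_diagonal] at h0
    have := congrFun (congrFun h0 i) i
    simpa [Matrix.diagonal] using this
  have hcard : Fintype.card n ≤ (minpoly ℂ (Matrix.diagonal d)).natDegree := by
    have himg : Finset.univ.image d ⊆ (minpoly ℂ (Matrix.diagonal d)).roots.toFinset := by
      intro x hx
      simp only [Finset.mem_image] at hx
      obtain ⟨i, _, rfl⟩ := hx
      rw [Multiset.mem_toFinset, Polynomial.mem_roots hμ0]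
      exact hroot i
    calc Fintype.card n = (Finset.univ.image d).card := by
          rw [Finset.card_image_of_injective _ hd, Finset.card_univ]
      _ ≤ (minpoly ℂ (Matrix.diagonal d)).roots.toFinset.card := Finset.card_le_card himg
      _ ≤ Multiset.card (minpoly ℂ (Matrix.diagonal d)).roots := Multiset.toFinset_card_le _
      _ ≤ _ := Polynomial.card_roots' _
  obtain ⟨c, hc⟩ := hdvd
  have hchm : (Matrix.diagonal d).charpoly.Monic := Matrix.charpoly_monic _
  have hc0 : c ≠ 0 := by
    rintro rfl
    rw [mul_zero] at hc
    exact hchm.ne_zero hc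
  have hdeg : (Matrix.diagonal d).charpoly.natDegree = Fintype.card n :=
    Matrix.charpoly_natDegree_eq_dim _
  have hnc : c.natDegree = 0 := by
    have := Polynomial.natDegree_mul hμ0 hc0
    rw [← hc, hdeg] at this
    omega
  obtain ⟨a, rfl⟩ := Polynomial.natDegree_eq_zero.mp hnc
  have hmon := minpoly.monic hint
  have ha : a = 1 := by
    have := hchm.leadingCoeff
    rw [hc, Polynomial.leadingCoeff_mul, hmon.leadingCoeff, one_mul,
      Polynomial.leadingCoeff_C] at this
    exact this
  rw [hc, ha, Polynomial.C_1, mul_one]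

lemma finrank_ker_le (P Q : Matrix n n ℂ) (hPQ : P * Q = 1) (hQP : Q * P = 1) (w : n → ℂ)
    (hw : Subsingleton {i // w i = 0}) :
    Module.finrank ℂ (LinearMap.ker (P * Matrix.diagonal w * Q).mulVecLin)
      ≤ 1 := by
  classical
  have hrank : (P * Matrix.diagonal w * Q).rank = Fintype.card {i // w i ≠ 0} := by
    rw [Matrix.rank_mul_eq_left_of_isUnit_det Q _ (Matrix.isUnit_det_of_left_inverse hPQ),
      Matrix.rank_mul_eq_right_of_isUnit_det P _ (Matrix.isUnit_det_of_right_inverse hPQ),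
      Matrix.rank_diagonal]
  have hcompl : Fintype.card {i // w i ≠ 0} = Fintype.card n - Fintype.card {i // w i = 0} :=
    Fintype.card_subtype_compl _
  have hle1 : Fintype.card {i // w i = 0} ≤ 1 := Fintype.card_le_one_iff_subsingleton.mpr hw
  have hsum := LinearMap.finrank_range_add_finrank_ker (P * Matrix.diagonal w * Q).mulVecLin
  rw [Module.finrank_fintype_fun_eq_card] at hsum
  have hR : (P * Matrix.diagonal w * Q).rank
      = Module.finrank ℂ (LinearMap.range (P * Matrix.diagonal w * Q).mulVecLin) := rfl
  have hcle : Fintype.card {i // w i = 0} ≤ Fintype.card n := Fintype.card_subtype_le _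
  omega


def pent (i j : ℕ) : ℂ :=
  if i = 0 then (if j = 0 then (1 : ℂ) else if j = 1 then (1 : ℂ) else if j = 2 then (1 : ℂ) else 0) else
  if i = 1 then (if j = 3 then (1 : ℂ) else if j = 4 then (1 : ℂ) else 0) else
  if i = 2 then (if j = 5 then (1 : ℂ) else if j = 6 then (1 : ℂ) else 0) else
  if i = 3 then (if j = 3 then (1 : ℂ) else if j = 4 then (-1 : ℂ) else 0) else
  if i = 4 then (if j = 0 then (1 : ℂ) else if j = 1 then (-1 : ℂ) else if j = 2 then (1 : ℂ) else 0) else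
  if i = 5 then (if j = 7 then (1 : ℂ) else if j = 8 then (1 : ℂ) else 0) else
  if i = 6 then (if j = 5 then (1 : ℂ) else if j = 6 then (-1 : ℂ) else 0) else
  if i = 7 then (if j = 7 then (1 : ℂ) else if j = 8 then (-1 : ℂ) else 0) else
  if i = 8 then (if j = 0 then (1 : ℂ) else if j = 2 then (-2 : ℂ) else 0) else
  0

def qent (i j : ℕ) : ℂ :=
  if i = 0 then (if j = 0 then (1/3 : ℂ) else if j = 4 then (1/3 : ℂ) else if j = 8 then (1/3 : ℂ) else 0) else
  if i = 1 then (if j = 0 then (1/2 : ℂ) else if j = 4 then (-1/2 : ℂ) else 0) else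
  if i = 2 then (if j = 0 then (1/6 : ℂ) else if j = 4 then (1/6 : ℂ) else if j = 8 then (-1/3 : ℂ) else 0) else
  if i = 3 then (if j = 1 then (1/2 : ℂ) else if j = 3 then (1/2 : ℂ) else 0) else
  if i = 4 then (if j = 1 then (1/2 : ℂ) else if j = 3 then (-1/2 : ℂ) else 0) else
  if i = 5 then (if j = 2 then (1/2 : ℂ) else if j = 6 then (1/2 : ℂ) else 0) else
  if i = 6 then (if j = 2 then (1/2 : ℂ) else if j = 6 then (-1/2 : ℂ) else 0) else
  if i = 7 then (if j = 5 then (1/2 : ℂ) else if j = 7 then (1/2 : ℂ) else 0) else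
  if i = 8 then (if j = 5 then (1/2 : ℂ) else if j = 7 then (-1/2 : ℂ) else 0) else
  0

def dent (a1 a2 a3 a4 a5 a6 : ℝ) (i : ℕ) : ℝ :=
  if i = 0 then 0 else
  if i = 1 then -(2*a1+2*a2+a4+a5) else
  if i = 2 then -(3*a4+3*a5) else
  if i = 3 then -(2*a2+2*a3+a4+a5) else
  if i = 4 then -(2*a1+2*a3+a4+a5) else
  if i = 5 then -(2*a1+2*a2+2*a3)+a4-a5 else
  if i = 6 then -(2*a1+2*a2+2*a3)-a4+a5 else
  if i = 7 then -(2*a1+2*a2+2*a3)-a4-a5+2*a6 else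
  -(2*a1+2*a2+2*a3)+a4+a5-2*a6


def gent (a1 a2 a3 a4 a5 a6 : ℝ) (i j : ℕ) : ℝ :=
  if i = 0 then (if j = 0 then (-(a1+a2+a4+a5)) else if j = 4 then (a1+a2) else if j = 8 then (a4+a5) else 0) else
  if i = 1 then (if j = 1 then (-(a1+a2+2*a3+a4+a5)) else if j = 3 then (a1-a2) else 0) else
  if i = 2 then (if j = 2 then (-(2*a1+2*a2+2*a3)) else if j = 6 then (a4-a5) else 0) else
  if i = 3 then (if j = 1 then (a1-a2) else if j = 3 then (-(a1+a2+2*a3+a4+a5)) else 0) else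
  if i = 4 then (if j = 0 then (a1+a2) else if j = 4 then (-(a1+a2+a4+a5)) else if j = 8 then (a4+a5) else 0) else
  if i = 5 then (if j = 5 then (-(2*a1+2*a2+2*a3)) else if j = 7 then (2*a6-a4-a5) else 0) else
  if i = 6 then (if j = 2 then (a4-a5) else if j = 6 then (-(2*a1+2*a2+2*a3)) else 0) else
  if i = 7 then (if j = 5 then (2*a6-a4-a5) else if j = 7 then (-(2*a1+2*a2+2*a3)) else 0) else
  if i = 8 then (if j = 0 then (a4+a5) else if j = 4 then (a4+a5) else if j = 8 then (-(2*a4+2*a5)) else 0) else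
  0

def ix (p : Fin 3 × Fin 3) : ℕ := 3 * p.1.val + p.2.val

def Pm : Matrix (Fin 3 × Fin 3) (Fin 3 × Fin 3) ℂ := Matrix.of fun p q => pent (ix p) (ix q)
def Qm : Matrix (Fin 3 × Fin 3) (Fin 3 × Fin 3) ℂ := Matrix.of fun p q => qent (ix p) (ix q)

def Gm (a1 a2 a3 a4 a5 a6 : ℝ) : Matrix (Fin 3 × Fin 3) (Fin 3 × Fin 3) ℂ :=
  Matrix.of fun p q => ((gent a1 a2 a3 a4 a5 a6 (ix p) (ix q) : ℝ) : ℂ)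

def ddf (a1 a2 a3 a4 a5 a6 : ℝ) : Fin 3 × Fin 3 → ℂ :=
  fun p => ((dent a1 a2 a3 a4 a5 a6 (ix p) : ℝ) : ℂ)

set_option maxHeartbeats 4000000 in
lemma hPQ : Pm * Qm = 1 := by
  ext ⟨i, j⟩ ⟨k, l⟩
  fin_cases i <;> fin_cases j <;> fin_cases k <;> fin_cases l <;>
    · simp only [Pm, Qm, Matrix.mul_apply, Fintype.sum_prod_type, Fin.sum_univ_three,
        Matrix.of_apply, ix, Matrix.one_apply, pent, qent]
      norm_num [Prod.ext_iff, Fin.ext_iff]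

lemma hQP : Qm * Pm = 1 := mul_eq_one_comm.mp hPQ

set_option maxHeartbeats 4000000 in
lemma hgen (a1 a2 a3 a4 a5 a6 : ℝ) : gen3 a1 a2 a3 a4 a5 a6 = Gm a1 a2 a3 a4 a5 a6 := by
  rw [gen3, k8, gm2T, gm5T, gm7T]
  ext ⟨i, j⟩ ⟨k, l⟩
  fin_cases i <;> fin_cases j <;> fin_cases k <;> fin_cases l <;>
    (simp [Gm, ix, gent, Matrix.one_apply, gm1, gm2, gm3, gm4, gm5, gm6, gm7,
        Matrix.kroneckerMap_apply, Prod.ext_iff, Fin.ext_iff, Matrix.vecHead, Matrix.vecTail, -Fin.val_eq_zero_iff] <;>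
      push_cast <;> (try ring_nf) <;> (try simp [Complex.I_sq]) <;> (try push_cast) <;>
      (try ring_nf) <;> (try norm_num))

set_option maxHeartbeats 4000000 in
lemma hGP (a1 a2 a3 a4 a5 a6 : ℝ) :
    Gm a1 a2 a3 a4 a5 a6 * Pm = Pm * Matrix.diagonal (ddf a1 a2 a3 a4 a5 a6) := by
  ext ⟨i, j⟩ ⟨k, l⟩
  fin_cases i <;> fin_cases j <;> fin_cases k <;> fin_cases l <;>
    (simp [Gm, Pm, ddf, Matrix.mul_apply, Matrix.mul_diagonal, Fintype.sum_prod_type,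
        Fin.sum_univ_three, ix, gent, pent, dent, Matrix.vecHead, Matrix.vecTail,
        Matrix.diagonal_apply, Prod.ext_iff, Fin.ext_iff, -Fin.val_eq_zero_iff] <;>
      push_cast <;> (try ring_nf) <;> (try norm_num))

lemma key1 (a1 a2 a3 a4 a5 a6 : ℝ) :
    gen3 a1 a2 a3 a4 a5 a6 = Pm * Matrix.diagonal (ddf a1 a2 a3 a4 a5 a6) * Qm := by
  calc gen3 a1 a2 a3 a4 a5 a6 = gen3 a1 a2 a3 a4 a5 a6 * (Pm * Qm) := by
        rw [hPQ, Matrix.mul_one]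
    _ = (gen3 a1 a2 a3 a4 a5 a6 * Pm) * Qm := by rw [Matrix.mul_assoc]
    _ = Pm * Matrix.diagonal (ddf a1 a2 a3 a4 a5 a6) * Qm := by rw [hgen, hGP]

set_option maxHeartbeats 4000000 in
lemma dinj (a1 a2 a3 a4 a5 a6 a7 a8 : ℝ)
    (h7 : a7 = a4 + a5 - a6) (h8 : a8 = a1 + a2 + a3 - a4 - a5)
    (h1 : 0 ≤ a1) (h2 : 0 ≤ a2) (h3 : 0 ≤ a3) (h4 : 0 ≤ a4)
    (h5 : 0 ≤ a5) (h6 : 0 ≤ a6) (h7' : 0 ≤ a7) (h8' : 0 ≤ a8)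
    (n12 : a1 ≠ a2) (n13 : a1 ≠ a3) (n14 : a1 ≠ a4) (n15 : a1 ≠ a5) (n16 : a1 ≠ a6)
    (n17 : a1 ≠ a7) (n18 : a1 ≠ a8) (n23 : a2 ≠ a3) (n24 : a2 ≠ a4) (n25 : a2 ≠ a5)
    (n26 : a2 ≠ a6) (n27 : a2 ≠ a7) (n28 : a2 ≠ a8) (n34 : a3 ≠ a4) (n35 : a3 ≠ a5)
    (n36 : a3 ≠ a6) (n37 : a3 ≠ a7) (n38 : a3 ≠ a8) (n45 : a4 ≠ a5) (n46 : a4 ≠ a6)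
    (n47 : a4 ≠ a7) (n48 : a4 ≠ a8) (n56 : a5 ≠ a6) (n57 : a5 ≠ a7) (n58 : a5 ≠ a8)
    (n67 : a6 ≠ a7) (n68 : a6 ≠ a8) (n78 : a7 ≠ a8) :
    Function.Injective (ddf a1 a2 a3 a4 a5 a6) := by
  have hreal : Function.Injective (fun p : Fin 3 × Fin 3 => dent a1 a2 a3 a4 a5 a6 (ix p)) := by
    intro p q hpq
    obtain ⟨i, j⟩ := p
    obtain ⟨k, l⟩ := q
    fin_cases i <;> fin_cases j <;> fin_cases k <;> fin_cases l <;>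
      first
      | rfl
      | (simp only [ix, dent] at hpq
         norm_num at hpq
         exfalso
         first
         | exact n12 (by linarith) | exact n13 (by linarith) | exact n14 (by linarith)
         | exact n15 (by linarith) | exact n16 (by linarith) | exact n17 (by linarith)
         | exact n18 (by linarith) | exact n23 (by linarith) | exact n24 (by linarith)
         | exact n25 (by linarith) | exact n26 (by linarith) | exact n27 (by linarith)
         | exact n28 (by linarith) | exact n34 (by linarith) | exact n35 (by linarith)
         | exact n36 (by linarith) | exact n37 (by linarith) | exact n38 (by linarith)
         | exact n45 (by linarith) | exact n46 (by linarith) | exact n47 (by linarith)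
         | exact n48 (by linarith) | exact n56 (by linarith) | exact n57 (by linarith)
         | exact n58 (by linarith) | exact n67 (by linarith) | exact n68 (by linarith)
         | exact n78 (by linarith))
  intro p q hpq
  exact hreal (Complex.ofReal_inj.mp hpq)

end Gen3Aux

open Gen3Aux in
/-- under nonnegativity and pairwise distinctness of
`a1, ..., a6, a7 = a4+a5−a6, a8 = a1+a2+a3−a4−a5`, the 9×9 generator `L₃` has nine
pairwise distinct eigenvalues; consequently every eigenspace (kernel of `L₃ − λ I₉`) has
dimension at most 1 (index of cyclicity 1), and the minimal polynomial of `L₃` equals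
its characteristic polynomial. -/
theorem gen3_index_of_cyclicity_one (a1 a2 a3 a4 a5 a6 a7 a8 : ℝ)
    (h7 : a7 = a4 + a5 - a6) (h8 : a8 = a1 + a2 + a3 - a4 - a5)
    (h1 : 0 ≤ a1) (h2 : 0 ≤ a2) (h3 : 0 ≤ a3) (h4 : 0 ≤ a4)
    (h5 : 0 ≤ a5) (h6 : 0 ≤ a6) (h7' : 0 ≤ a7) (h8' : 0 ≤ a8)
    (hdist : List.Pairwise (· ≠ ·) [a1, a2, a3, a4, a5, a6, a7, a8]) :
    (∃ α : Fin 9 → ℂ, Function.Injective α ∧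
        (gen3 a1 a2 a3 a4 a5 a6).charpoly = ∏ i : Fin 9, (X - C (α i))) ∧
    (∀ lam : ℂ,
      Module.finrank ℂ
        (LinearMap.ker (gen3 a1 a2 a3 a4 a5 a6 - lam • 1).mulVecLin) ≤ 1) ∧
    minpoly ℂ (gen3 a1 a2 a3 a4 a5 a6) = (gen3 a1 a2 a3 a4 a5 a6).charpoly := by
  classical
  simp only [List.pairwise_cons, List.mem_cons, List.mem_singleton, List.not_mem_nil,
    forall_eq_or_imp, forall_eq, List.Pairwise.nil, and_true, IsEmpty.forall_iff] at hdist
  obtain ⟨⟨n12, n13, n14, n15, n16, n17, n18⟩, ⟨n23, n24, n25, n26, n27, n28⟩,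
    ⟨n34, n35, n36, n37, n38⟩, ⟨n45, n46, n47, n48⟩, ⟨n56, n57, n58⟩, ⟨n67, n68⟩, n78⟩ := hdist
  have n18 : a1 ≠ a8 := n18.1
  have n28 : a2 ≠ a8 := n28.1
  have n38 : a3 ≠ a8 := n38.1
  have n48 : a4 ≠ a8 := n48.1
  have n58 : a5 ≠ a8 := n58.1
  have n68 : a6 ≠ a8 := n68.1
  have n78 : a7 ≠ a8 := n78.1.1
  have hinj : Function.Injective (ddf a1 a2 a3 a4 a5 a6) :=
    dinj a1 a2 a3 a4 a5 a6 a7 a8 h7 h8 h1 h2 h3 h4 h5 h6 h7' h8' n12 n13 n14 n15 n16 n17 n18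
      n23 n24 n25 n26 n27 n28 n34 n35 n36 n37 n38 n45 n46 n47 n48 n56 n57 n58 n67 n68 n78
  have hk := key1 a1 a2 a3 a4 a5 a6
  have e9 : (Fin 3 × Fin 3) ≃ Fin 9 := finProdFinEquiv.trans (finCongr (by norm_num))
  have hcp : (gen3 a1 a2 a3 a4 a5 a6).charpoly
      = ∏ p : Fin 3 × Fin 3, (X - C (ddf a1 a2 a3 a4 a5 a6 p)) := by
    rw [hk, charpoly_conj _ _ _ hPQ, Gen3Aux.charpoly_diagonal]
  refine ⟨⟨fun i => ddf a1 a2 a3 a4 a5 a6 (e9.symm i), ?_, ?_⟩, ?_, ?_⟩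
  · exact hinj.comp e9.symm.injective
  · rw [hcp]
    exact Fintype.prod_equiv e9 _ _ fun p => by simp only [Equiv.symm_apply_apply]
  · intro lam
    have hsub : gen3 a1 a2 a3 a4 a5 a6 - lam • 1
        = Pm * Matrix.diagonal (fun p => ddf a1 a2 a3 a4 a5 a6 p - lam) * Qm := by
      have hd : Matrix.diagonal (fun p => ddf a1 a2 a3 a4 a5 a6 p - lam)
          = Matrix.diagonal (ddf a1 a2 a3 a4 a5 a6) - lam • 1 := by
        ext p q
        by_cases h : p = q <;>
          simp [h, Matrix.diagonal_apply, Matrix.one_apply, Matrix.diagonal_apply_ne]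
      rw [hd, Matrix.mul_sub, Matrix.sub_mul, hk]
      congr 1
      rw [Matrix.mul_smul, Matrix.mul_one, Matrix.smul_mul, hPQ]
    rw [hsub]
    refine finrank_ker_le Pm Qm hPQ hQP _ ?_
    constructor
    rintro ⟨x, hx⟩ ⟨y, hy⟩
    have hxy : ddf a1 a2 a3 a4 a5 a6 x = ddf a1 a2 a3 a4 a5 a6 y := by
      have hx' : ddf a1 a2 a3 a4 a5 a6 x = lam := by linear_combination hx
      have hy' : ddf a1 a2 a3 a4 a5 a6 y = lam := by linear_combination hy
      rw [hx', hy']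
    exact Subtype.ext (hinj hxy)
  · have hmp : minpoly ℂ (gen3 a1 a2 a3 a4 a5 a6)
        = minpoly ℂ (Matrix.diagonal (ddf a1 a2 a3 a4 a5 a6)) := by
      rw [hk]
      exact minpoly.algHom_eq (conjAlgHom Pm Qm hPQ hQP) (conjAlgHom_injective Pm Qm hPQ hQP) _
    rw [hmp, minpoly_diagonal _ hinj, hk, charpoly_conj _ _ _ hPQ]

end
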